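/- Let R be a D-K elementary divisor domain (every matrix is equivalent to diag(ε₁,…,ε_r,0,…,0) with Rε_{i+1}R ⊆ ε_iR ∩ Rε_i and ε₁,…,ε_{r−1} invariant). Then R is a ring of simple range 2. -/

import Mathlib

def SimpleRange2 (R : Type*) [Ring R] : Prop :=
  ∀ a b c : R, c ≠ 0 → (1 : R) ∈ TwoSidedIdeal.span {a, b, c} →
    ∃ p q : R, (1 : R) ∈ TwoSidedIdeal.span {p * a + q * b, p * c}

/-- An element is invariant if `aR = Ra` (as sets). -/
def InvariantElem {R : Type*} [Ring R] (a : R) : Prop :=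
  (Submodule.span Rᵐᵒᵖ {a} : Set R) = (Ideal.span {a} : Set R)

/-- A D-K elementary divisor ring: every matrix is equivalent to a diagonal matrix
`diag(ε₁, …, ε_r, 0, …, 0)` with `Rε_{i+1}R ⊆ ε_iR ∩ Rε_i` and `ε₁, …, ε_{r-1}` invariant. -/
def DKElementaryDivisorRing (R : Type*) [Ring R] : Prop :=
  ∀ (n m : ℕ) (A : Matrix (Fin n) (Fin m) R),
    ∃ (P : Matrix (Fin n) (Fin n) R) (Q : Matrix (Fin m) (Fin m) R) (r : ℕ),
      IsUnit P ∧ IsUnit Q ∧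
      -- off-diagonal entries vanish
      (∀ (i : Fin n) (j : Fin m), (i : ℕ) ≠ (j : ℕ) → (P * A * Q) i j = 0) ∧
      -- diagonal entries beyond position `r` vanish
      (∀ (i : Fin n) (j : Fin m), (i : ℕ) = (j : ℕ) → r ≤ (i : ℕ) → (P * A * Q) i j = 0) ∧
      -- the first `r` diagonal entries are nonzero
      (∀ (i : Fin n) (j : Fin m), (i : ℕ) = (j : ℕ) → (i : ℕ) < r → (P * A * Q) i j ≠ 0) ∧
      -- `R ε_{i+1} R ⊆ ε_i R ∩ R ε_i`
      (∀ (i : Fin n) (j : Fin m) (i' : Fin n) (j' : Fin m), (i : ℕ) = (j : ℕ) → (i' : ℕ) = (j' : ℕ) →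
        (i' : ℕ) = (i : ℕ) + 1 → (i' : ℕ) < r →
        (TwoSidedIdeal.span {(P * A * Q) i' j'} : Set R) ⊆
          (Submodule.span Rᵐᵒᵖ {(P * A * Q) i j} : Set R) ∩
          (Ideal.span {(P * A * Q) i j} : Set R)) ∧
      -- `ε₁, …, ε_{r-1}` are invariant
      (∀ (i : Fin n) (j : Fin m), (i : ℕ) = (j : ℕ) → (i : ℕ) + 1 < r → InvariantElem ((P * A * Q) i j))

theorem simpleRange2_of_DK_elementary_divisor {R : Type*} [Ring R] [IsDomain R]
    (hDK : DKElementaryDivisorRing R) : SimpleRange2 R := by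
  intro a b c hc h1
  set A : Matrix (Fin 2) (Fin 2) R := !![a, c; b, 0] with hA
  obtain ⟨P, Q, r, hP, hQ, hoff, hbeyond, -, hchain, hinv⟩ := hDK 2 2 A
  obtain ⟨Pu, hPu⟩ := hP
  obtain ⟨Qu, hQu⟩ := hQ
  set D := P * A * Q with hD
  set P' : Matrix (Fin 2) (Fin 2) R := (Pu⁻¹ : (Matrix (Fin 2) (Fin 2) R)ˣ).val with hP'
  set Q' : Matrix (Fin 2) (Fin 2) R := (Qu⁻¹ : (Matrix (Fin 2) (Fin 2) R)ˣ).val with hQ'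
  have hQQ' : Q * Q' = 1 := by rw [hQ', ← hQu]; exact_mod_cast Qu.mul_inv
  have hQ'Q : Q' * Q = 1 := by rw [hQ', ← hQu]; exact_mod_cast Qu.inv_mul
  have hPP' : P * P' = 1 := by rw [hP', ← hPu]; exact_mod_cast Pu.mul_inv
  have hP'P : P' * P = 1 := by rw [hP', ← hPu]; exact_mod_cast Pu.inv_mul
  have hD01 : D 0 1 = 0 := hoff 0 1 (by simp)
  have hD10 : D 1 0 = 0 := hoff 1 0 (by simp)
  have hPA : P * A = D * Q' := by
    rw [hD, Matrix.mul_assoc (P * A) Q Q', hQQ', Matrix.mul_one]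
  have hAeq : A = P' * D * Q' := by
    rw [hD]
    rw [show P' * (P * A * Q) * Q' = (P' * P) * A * (Q * Q') by
      simp only [Matrix.mul_assoc], hP'P, hQQ', Matrix.one_mul, Matrix.mul_one]
  have entry : ∀ (X Y : Matrix (Fin 2) (Fin 2) R) (i j : Fin 2),
      (X * Y) i j = X i 0 * Y 0 j + X i 1 * Y 1 j := by
    intro X Y i j
    rw [Matrix.mul_apply, Fin.sum_univ_two]
  have hA00 : A 0 0 = a := by simp [hA]
  have hA01 : A 0 1 = c := by simp [hA]
  have hA10 : A 1 0 = b := by simp [hA]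
  have hA11 : A 1 1 = 0 := by simp [hA]
  by_cases hr : 2 ≤ r
  · -- ε₁ := D 0 0 is invariant and generates R, hence a unit
    have hinv' : InvariantElem (D 0 0) := hinv 0 0 rfl (by simpa using (show 1 < r by omega))
    have hch := hchain 0 0 1 1 rfl rfl (by simp) (by simpa using (show 1 < r by omega))
    -- J : the two-sided ideal εR = Rε
    have mul_right_mem : ∀ {x : R} (y : R), x ∈ (Ideal.span {D 0 0} : Set R) →
        x * y ∈ (Ideal.span {D 0 0} : Set R) := by
      intro x y hx
      rw [← hinv'] at hx ⊢
      simpa [op_smul_eq_mul] using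
        Submodule.smul_mem (Submodule.span Rᵐᵒᵖ {D 0 0}) (MulOpposite.op y) hx
    set J : TwoSidedIdeal R := TwoSidedIdeal.mk' (Ideal.span {D 0 0} : Set R)
      (Ideal.span {D 0 0}).zero_mem (fun hx hy => (Ideal.span {D 0 0}).add_mem hx hy)
      (fun hx => (Ideal.span {D 0 0}).neg_mem hx)
      (fun {x y} hy => Ideal.mul_mem_left _ x hy)
      (fun {x y} hx => mul_right_mem y hx) with hJ
    have memJ : ∀ z : R, z ∈ J ↔ z ∈ (Ideal.span {D 0 0} : Set R) := fun z =>
      TwoSidedIdeal.mem_mk' _ _ _ _ _ _ z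
    have hεJ : D 0 0 ∈ J := (memJ _).2 (Ideal.subset_span rfl)
    have hε2J : D 1 1 ∈ J := (memJ _).2 <|
      (hch (TwoSidedIdeal.subset_span rfl)).2
    have hAJ : ∀ i j : Fin 2, A i j ∈ J := by
      intro i j
      have h : A i j = P' i 0 * ((D * Q') 0 j) + P' i 1 * ((D * Q') 1 j) := by
        conv_lhs => rw [hAeq, Matrix.mul_assoc, entry]
      rw [h, entry, entry, hD01, hD10]
      simp only [zero_mul, mul_zero, add_zero, zero_add]
      exact J.add_mem (J.mul_mem_left _ _ (J.mul_mem_right _ _ hεJ))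
        (J.mul_mem_left _ _ (J.mul_mem_right _ _ hε2J))
    have h1J : (1 : R) ∈ J := by
      refine TwoSidedIdeal.mem_span_iff.1 h1 J ?_
      intro x hx
      rcases hx with rfl | rfl | rfl
      · show x ∈ J; simpa only [hA00] using hAJ 0 0
      · show x ∈ J; simpa only [hA10] using hAJ 1 0
      · show x ∈ J; simpa only [hA01] using hAJ 0 1
    -- D 0 0 is a unit
    obtain ⟨w, hw⟩ := Submodule.mem_span_singleton.1 ((memJ 1).1 h1J)
    have hw : w * D 0 0 = 1 := hw
    obtain ⟨w', hw'⟩ := Submodule.mem_span_singleton.1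
      (show (1 : R) ∈ (Submodule.span Rᵐᵒᵖ {D 0 0} : Set R) by
        rw [hinv']; exact (memJ 1).1 h1J)
    have hw'2 : D 0 0 * w'.unop = 1 := by
      rw [← hw', MulOpposite.smul_eq_mul_unop]
    have hww' : w = w'.unop := by
      calc w = w * (D 0 0 * w'.unop) := by rw [hw'2, mul_one]
      _ = (w * D 0 0) * w'.unop := by rw [mul_assoc]
      _ = w'.unop := by rw [hw, one_mul]
    have hεw : D 0 0 * w = 1 := by rw [hww']; exact hw'2
    -- the first row of P works
    refine ⟨P 0 0, P 0 1, ?_⟩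
    have he1 : P 0 0 * a + P 0 1 * b = D 0 0 * Q' 0 0 := by
      have h := entry P A 0 0
      rw [hPA, entry, hD01, hA00, hA10] at h
      rw [← h]
      simp
    have he2 : P 0 0 * c = D 0 0 * Q' 0 1 := by
      have h := entry P A 0 1
      rw [hPA, entry, hD01, hA01, hA11] at h
      rw [show P 0 0 * c = P 0 0 * c + P 0 1 * 0 by rw [mul_zero, add_zero], ← h]
      simp
    have hrow : Q' 0 0 * Q 0 0 + Q' 0 1 * Q 1 0 = 1 := by
      have h := entry Q' Q 0 0
      rw [hQ'Q] at h
      simpa using h.symm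
    set I := TwoSidedIdeal.span {P 0 0 * a + P 0 1 * b, P 0 0 * c} with hI
    have m1 : P 0 0 * a + P 0 1 * b ∈ I := TwoSidedIdeal.subset_span (by left; rfl)
    have m2 : P 0 0 * c ∈ I := TwoSidedIdeal.subset_span (by right; rfl)
    have key : (1 : R) = (w * (P 0 0 * a + P 0 1 * b)) * Q 0 0
        + (w * (P 0 0 * c)) * Q 1 0 := by
      rw [he1, he2, ← mul_assoc, ← mul_assoc, hw, one_mul, one_mul]
      exact hrow.symm
    rw [key]
    exact I.add_mem (I.mul_mem_right _ _ (I.mul_mem_left _ _ m1))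
      (I.mul_mem_right _ _ (I.mul_mem_left _ _ m2))
  · -- r ≤ 1 : second row of D … forces b = 0
    have hD11 : D 1 1 = 0 := hbeyond 1 1 rfl (by show r ≤ 1; omega)
    have hrow1 : ∀ j : Fin 2, (P * A) 1 j = 0 := by
      intro j
      rw [hPA, entry, hD10, hD11]
      simp
    have hsc : P 1 0 * c = 0 := by
      have := entry P A 1 1
      rw [hrow1 1, hA11, hA01] at this
      simpa using this.symm
    have hs0 : P 1 0 = 0 := by
      rcases mul_eq_zero.1 hsc with h | h
      · exact h
      · exact absurd h hc
    have htb : P 1 1 * b = 0 := by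
      have := entry P A 1 0
      rw [hrow1 0, hA10, hA00, hs0] at this
      simpa using this.symm
    have ht : P 1 1 ≠ 0 := by
      intro ht0
      have := entry P P' 1 1
      rw [hPP', hs0, ht0] at this
      simp at this
    have hb0 : b = 0 := by
      rcases mul_eq_zero.1 htb with h | h
      · exact absurd h ht
      · exact h
    refine ⟨1, 0, ?_⟩
    refine TwoSidedIdeal.mem_span_iff.1 h1 _ ?_
    intro x hx
    rcases hx with rfl | rfl | rfl
    · simpa using TwoSidedIdeal.subset_span
        (show (1 : R) * x + 0 * b ∈ ({1 * x + 0 * b, 1 * c} : Set R) from Or.inl rfl)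
    · rw [hb0]
      exact TwoSidedIdeal.zero_mem _
    · simpa using TwoSidedIdeal.subset_span
        (show (1 : R) * x ∈ ({1 * a + 0 * b, 1 * x} : Set R) from Or.inr rfl)
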